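/- (KKT conditions for the multi-step risk-sensitive planning problem with scenario-decoupled react controls.) Let F : ℝ^{a} → ℝ be a convex differentiable prepare-phase cost of the prepare control vector u ∈ ℝ^{a}, and for each scenario j = 1, …, L let g_j : ℝ^{a} × ℝ^{b} → ℝ be a convex differentiable tail cost depending on u and on the react control vector r_j ∈ ℝ^{b} of scenario j only. Let all controls be constrained to nondegenerate boxes: u ∈ B₀ = {u : u⁻ ≤ u ≤ u⁺} and r_j ∈ B_j = {r : r⁻ ≤ r ≤ r⁺} componentwise, with strict inequality between lower and upper bounds. Let P be a nonempty compact convex subset of Δ^L, and suppose (u*, r₁*, …, r_L*) minimizes F(u) + max_{q ∈ P} Σ_j q(j)·g_j(u, r_j) over B₀ × B₁ × ⋯ × B_L. Then there exists v̄ ∈ P attaining the inner maximum at the optimum, i.e., Σ_j v̄(j)·g_j(u*, r_j*) = max_{q ∈ P} Σ_j q(j)·g_j(u*, r_j*), such that: for every prepare component i, ∂_{u(i)}[F(u) + Σ_j v̄(j) g_j(u, r_j*)]|_{u*} ≤ 0 if u*(i) is at its upper bound, ≥ 0 if at its lower bound, and = 0 otherwise; and for every scenario j and every react component i, v̄(j)·∂_{r_j(i)}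 g_j(u*, r_j)|_{r_j*} ≤ 0 if r_j*(i) is at its upper bound, ≥ 0 if at its lower bound, and = 0 otherwise. -/

import Mathlib

private lemma clm_expand {n : ℕ} (T : (Fin n → ℝ) →L[ℝ] ℝ) (y : Fin n → ℝ) :
    T y = ∑ i, y i * T (Pi.single i 1) := by
  conv_lhs => rw [← Finset.univ_sum_single y]
  rw [map_sum]
  refine Finset.sum_congr rfl fun i _ => ?_
  have h : (Pi.single i (y i) : Fin n → ℝ) = y i • (Pi.single i (1:ℝ) : Fin n → ℝ) := by
    funext k
    by_cases hk : k = i <;> simp [Pi.single_apply, hk]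
  rw [h, map_smul, smul_eq_mul]

private lemma clm_expand2 {m n : ℕ} (T : (Fin m → Fin n → ℝ) →L[ℝ] ℝ)
    (z : Fin m → Fin n → ℝ) :
    T z = ∑ j, ∑ i, z j i * T (Pi.single j (Pi.single i 1)) := by
  conv_lhs => rw [← Finset.univ_sum_single z]
  rw [map_sum]
  refine Finset.sum_congr rfl fun j _ => ?_
  have h1 : (Pi.single j (z j) : Fin m → Fin n → ℝ)
      = ∑ i, Pi.single j (Pi.single i (z j i)) := by
    have := map_sum (LinearMap.single ℝ (fun _ : Fin m => Fin n → ℝ) j)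
      (fun i : Fin n => (Pi.single i (z j i) : Fin n → ℝ)) Finset.univ
    simpa [Finset.univ_sum_single] using this
  rw [h1, map_sum]
  refine Finset.sum_congr rfl fun i _ => ?_
  have h2 : (Pi.single j (Pi.single i (z j i)) : Fin m → Fin n → ℝ)
      = z j i • (Pi.single j (Pi.single i (1:ℝ) : Fin n → ℝ) : Fin m → Fin n → ℝ) := by
    funext k l
    by_cases hk : k = j <;> by_cases hl : l = i <;>
      simp [Pi.single_apply, hk, hl]
  rw [h2, map_smul, smul_eq_mul]

private lemma step_aux {lo hi x d : ℝ} (h1 : lo ≤ x) (h2 : x ≤ hi) (hlt : lo < hi)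
    (hu : x = hi → d ≤ 0) (hl : x = lo → 0 ≤ d) :
    ∃ τ : ℝ, 0 < τ ∧ ∀ t : ℝ, 0 ≤ t → t ≤ τ → lo ≤ x + t * d ∧ x + t * d ≤ hi := by
  rcases lt_trichotomy d 0 with hd | hd | hd
  · have hxlo : lo < x := by
      rcases eq_or_lt_of_le h1 with h | h
      · exact absurd (hl h.symm) (not_le.2 hd)
      · exact h
    refine ⟨(x - lo) / (-d), div_pos (by linarith) (by linarith), fun t ht htτ => ?_⟩
    have hmul : t * (-d) ≤ ((x - lo) / (-d)) * (-d) :=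
      mul_le_mul_of_nonneg_right htτ (by linarith)
    rw [div_mul_cancel₀ _ (by linarith : (-d) ≠ 0)] at hmul
    constructor
    · nlinarith
    · nlinarith
  · subst hd; exact ⟨1, one_pos, fun t _ _ => by simpa using ⟨h1, h2⟩⟩
  · have hxhi : x < hi := by
      rcases eq_or_lt_of_le h2 with h | h
      · exact absurd (hu h) (not_le.2 hd)
      · exact h
    refine ⟨(hi - x) / d, div_pos (by linarith) (by linarith), fun t ht htτ => ?_⟩
    have hmul : t * d ≤ ((hi - x) / d) * d :=
      mul_le_mul_of_nonneg_right htτ (by linarith)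
    rw [div_mul_cancel₀ _ (by linarith : d ≠ 0)] at hmul
    constructor
    · nlinarith
    · nlinarith

private lemma convexOn_finset_sum {ι E : Type*} [AddCommGroup E] [Module ℝ E]
    {s : Finset ι} {f : ι → E → ℝ} (h : ∀ j ∈ s, ConvexOn ℝ Set.univ (f j)) :
    ConvexOn ℝ Set.univ (fun x => ∑ j ∈ s, f j x) := by
  classical
  induction s using Finset.cons_induction with
  | empty => simpa using convexOn_const (0:ℝ) convex_univ
  | cons j s hj ih =>
    simp only [Finset.sum_cons]
    exact (h j (Finset.mem_cons_self j s)).add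
      (ih fun k hk => h k (Finset.mem_cons.2 (Or.inr hk)))

private lemma slope_mono {lam A Bv C Phis : ℝ} (hlam0 : 0 < lam) (hlam1 : lam ≤ 1)
    (hcomb : Bv ≤ (1 - lam) * A + lam * C) (h0 : A ≤ Phis) (hle : Phis ≤ Bv) :
    Phis ≤ C := by
  have h2 : (1 - lam) * A ≤ (1 - lam) * Phis :=
    mul_le_mul_of_nonneg_left h0 (by linarith)
  have h3 : lam * Phis ≤ lam * C := by linarith
  exact le_of_mul_le_mul_left h3 hlam0

private lemma cone_props {A B : Prop} [Decidable A] [Decidable B] {K : Set ℝ}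
    (hK : K = if A then Set.Iic (0:ℝ) else if B then Set.Ici 0 else {0}) :
    IsClosed K ∧ Convex ℝ K ∧ (0:ℝ) ∈ K ∧ (∀ c x : ℝ, 0 ≤ c → x ∈ K → c * x ∈ K) := by
  subst hK
  split_ifs with h1 h2
  · exact ⟨isClosed_Iic, convex_Iic 0, Set.mem_Iic.2 le_rfl,
      fun c x hc hx => mul_nonpos_of_nonneg_of_nonpos hc hx⟩
  · exact ⟨isClosed_Ici, convex_Ici 0, Set.mem_Ici.2 le_rfl, fun c x hc hx => mul_nonneg hc hx⟩
  · exact ⟨isClosed_singleton, convex_singleton 0, rfl, fun c x hc hx => by simp_all⟩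

set_option maxHeartbeats 1600000



/-- KKT conditions for the multi-step risk-sensitive planning problem
with scenario-decoupled react controls: if `(u*, r₁*, …, r_L*)` minimizes
`F u + max_{q ∈ P} ∑ j, q j * g j (u, r j)` over nondegenerate boxes, with `F` and each
`g j` convex and differentiable and `P` a nonempty compact convex subset of `Δ^L`, then
some `v̄ ∈ P` attains the inner maximum at the optimum and the stationarity conditions
hold: the partial derivatives of `u ↦ F u + ∑ j, v̄ j * g j (u, r_j*)` at `u*` are `≤ 0`
at upper-saturated prepare components, `≥ 0` at lower-saturated ones, `= 0` otherwise;
and for each scenario `j`, `v̄ j` times the partial derivatives of `r ↦ g j (u*, r)` at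
`r_j*` are `≤ 0`, `≥ 0`, `= 0` at upper-saturated, lower-saturated, interior react
components respectively. -/
theorem kkt_multi_step
    (L a b : ℕ)
    (F : (Fin a → ℝ) → ℝ)
    (hFconv : ConvexOn ℝ Set.univ F) (hFdiff : Differentiable ℝ F)
    (g : Fin L → (Fin a → ℝ) → (Fin b → ℝ) → ℝ)
    (hgconv : ∀ j, ConvexOn ℝ Set.univ
      (fun p : (Fin a → ℝ) × (Fin b → ℝ) => g j p.1 p.2))
    (hgdiff : ∀ j, Differentiable ℝ
      (fun p : (Fin a → ℝ) × (Fin b → ℝ) => g j p.1 p.2))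
    (ulo uhi : Fin a → ℝ) (hubox : ∀ i, ulo i < uhi i)
    (rlo rhi : Fin L → Fin b → ℝ) (hrbox : ∀ j i, rlo j i < rhi j i)
    (B₀ : Set (Fin a → ℝ)) (hB₀ : B₀ = {u | ∀ i, ulo i ≤ u i ∧ u i ≤ uhi i})
    (B : Fin L → Set (Fin b → ℝ))
    (hB : ∀ j, B j = {r | ∀ i, rlo j i ≤ r i ∧ r i ≤ rhi j i})
    (P : Set (Fin L → ℝ)) (hPne : P.Nonempty) (hPcomp : IsCompact P)
    (hPconv : Convex ℝ P) (hPsub : P ⊆ stdSimplex ℝ (Fin L))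
    (Φ : (Fin a → ℝ) → (Fin L → Fin b → ℝ) → ℝ)
    (hΦ : ∀ u r, Φ u r = F u + sSup {x : ℝ | ∃ q ∈ P, x = ∑ j, q j * g j u (r j)})
    (ustar : Fin a → ℝ) (rstar : Fin L → Fin b → ℝ)
    (hufeas : ustar ∈ B₀) (hrfeas : ∀ j, rstar j ∈ B j)
    (hopt : ∀ u ∈ B₀, ∀ r : Fin L → Fin b → ℝ, (∀ j, r j ∈ B j) →
      Φ ustar rstar ≤ Φ u r) :
    ∃ v ∈ P,
      (∑ j, v j * g j ustar (rstar j)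
        = sSup {x : ℝ | ∃ q ∈ P, x = ∑ j, q j * g j ustar (rstar j)}) ∧
      (∀ i : Fin a,
        (ustar i = uhi i →
          fderiv ℝ (fun u => F u + ∑ j, v j * g j u (rstar j)) ustar
            (Pi.single i 1) ≤ 0) ∧
        (ustar i = ulo i →
          0 ≤ fderiv ℝ (fun u => F u + ∑ j, v j * g j u (rstar j)) ustar
            (Pi.single i 1)) ∧
        (ustar i ≠ uhi i → ustar i ≠ ulo i →
          fderiv ℝ (fun u => F u + ∑ j, v j * g j u (rstar j)) ustar
            (Pi.single i 1) = 0)) ∧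
      (∀ j : Fin L, ∀ i : Fin b,
        (rstar j i = rhi j i →
          v j * fderiv ℝ (fun r => g j ustar r) (rstar j) (Pi.single i 1) ≤ 0) ∧
        (rstar j i = rlo j i →
          0 ≤ v j * fderiv ℝ (fun r => g j ustar r) (rstar j) (Pi.single i 1)) ∧
        (rstar j i ≠ rhi j i → rstar j i ≠ rlo j i →
          v j * fderiv ℝ (fun r => g j ustar r) (rstar j) (Pi.single i 1) = 0)) := by
  classical
  rw [hB₀] at hufeas
  have hrfeas' : ∀ j i, rlo j i ≤ rstar j i ∧ rstar j i ≤ rhi j i := by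
    intro j; have h := hrfeas j; rw [hB j] at h; exact h
  have hgcont : ∀ j, Continuous fun p : (Fin a → ℝ) × (Fin b → ℝ) => g j p.1 p.2 :=
    fun j => (hgdiff j).continuous
  -- the set over which we take sSup is a compact image
  have hsetimg : ∀ (u : Fin a → ℝ) (r : Fin L → Fin b → ℝ),
      {x : ℝ | ∃ q ∈ P, x = ∑ j, q j * g j u (r j)}
        = (fun q : Fin L → ℝ => ∑ j, q j * g j u (r j)) '' P := by
    intro u r; ext x
    simp only [Set.mem_setOf_eq, Set.mem_image]
    exact ⟨fun ⟨q, hq, hx⟩ => ⟨q, hq, hx.symm⟩, fun ⟨q, hq, hx⟩ => ⟨q, hq, hx.symm⟩⟩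
  have hθcont : ∀ (u : Fin a → ℝ) (r : Fin L → Fin b → ℝ),
      Continuous fun q : Fin L → ℝ => ∑ j, q j * g j u (r j) := by
    intro u r
    exact continuous_finset_sum _ fun j _ => (continuous_apply j).mul continuous_const
  have key_att : ∀ (u : Fin a → ℝ) (r : Fin L → Fin b → ℝ), ∃ v ∈ P,
      (∑ j, v j * g j u (r j)) = sSup {x : ℝ | ∃ q ∈ P, x = ∑ j, q j * g j u (r j)} := by
    intro u r
    have h1 : sSup ((fun q : Fin L → ℝ => ∑ j, q j * g j u (r j)) '' P)
        ∈ (fun q : Fin L → ℝ => ∑ j, q j * g j u (r j)) '' P :=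
      (hPcomp.image (hθcont u r)).sSup_mem (hPne.image _)
    rw [hsetimg u r]
    obtain ⟨q, hq, hqe⟩ := h1
    exact ⟨q, hq, hqe⟩
  have key_le : ∀ (u : Fin a → ℝ) (r : Fin L → Fin b → ℝ), ∀ q ∈ P,
      (∑ j, q j * g j u (r j)) ≤ sSup {x : ℝ | ∃ q ∈ P, x = ∑ j, q j * g j u (r j)} := by
    intro u r q hq
    rw [hsetimg u r]
    exact le_csSup (hPcomp.image (hθcont u r)).bddAbove ⟨q, hq, rfl⟩
  -- derivatives
  set DF : (Fin a → ℝ) →L[ℝ] ℝ := fderiv ℝ F ustar with hDFdef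
  set Dg : Fin L → ((Fin a → ℝ) × (Fin b → ℝ)) →L[ℝ] ℝ :=
    fun j => fderiv ℝ (fun p : (Fin a → ℝ) × (Fin b → ℝ) => g j p.1 p.2) (ustar, rstar j)
    with hDgdef
  have hgu : ∀ j, HasFDerivAt (fun u => g j u (rstar j))
      ((Dg j).comp (ContinuousLinearMap.inl ℝ (Fin a → ℝ) (Fin b → ℝ))) ustar := fun j =>
    ((hgdiff j (ustar, rstar j)).hasFDerivAt.comp (f := fun u => (u, rstar j)) ustar
      (hasFDerivAt_prodMk_left ustar (rstar j)))
  have hgr : ∀ j, HasFDerivAt (fun r => g j ustar r)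
      ((Dg j).comp (ContinuousLinearMap.inr ℝ (Fin a → ℝ) (Fin b → ℝ))) (rstar j) := fun j =>
    ((hgdiff j (ustar, rstar j)).hasFDerivAt.comp (f := fun r => (ustar, r)) (rstar j)
      (hasFDerivAt_prodMk_right ustar (rstar j)))
  -- coordinates of the candidate gradient vector
  set cu : (Fin L → ℝ) → Fin a → ℝ := fun v i =>
    DF (Pi.single i 1) + ∑ j, v j * (Dg j) (Pi.single i 1, 0) with hcudef
  set cr : (Fin L → ℝ) → Fin L → Fin b → ℝ := fun v j i =>
    v j * (Dg j) (0, Pi.single i 1) with hcrdef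
  have hcu : ∀ (v : Fin L → ℝ) (i : Fin a),
      fderiv ℝ (fun u => F u + ∑ j, v j * g j u (rstar j)) ustar (Pi.single i 1) = cu v i := by
    intro v i
    have hsum : HasFDerivAt (fun u => F u + ∑ j, v j * g j u (rstar j))
        (DF + ∑ j, v j • ((Dg j).comp (ContinuousLinearMap.inl ℝ (Fin a → ℝ) (Fin b → ℝ))))
        ustar :=
      (hFdiff ustar).hasFDerivAt.add (HasFDerivAt.fun_sum fun j _ => (hgu j).const_mul (v j))
    rw [hsum.fderiv]
    simp [hcudef, ContinuousLinearMap.coe_sum', Finset.sum_apply, smul_eq_mul]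
  have hcr : ∀ (v : Fin L → ℝ) (j : Fin L) (i : Fin b),
      v j * fderiv ℝ (fun r => g j ustar r) (rstar j) (Pi.single i 1) = cr v j i := by
    intro v j i
    rw [(hgr j).fderiv]
    simp [hcrdef]
  -- the argmax set
  set S0 : ℝ := sSup {x : ℝ | ∃ q ∈ P, x = ∑ j, q j * g j ustar (rstar j)} with hS0def
  set M : Set (Fin L → ℝ) := {v | v ∈ P ∧ (∑ j, v j * g j ustar (rstar j)) = S0} with hMdef
  have hMsub : M ⊆ P := fun v hv => hv.1
  have hMne : M.Nonempty := by
    obtain ⟨v, hv, hve⟩ := key_att ustar rstar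
    exact ⟨v, hv, hve⟩
  have hMclosed : IsClosed M := by
    have : M = P ∩ {v : Fin L → ℝ | (∑ j, v j * g j ustar (rstar j)) = S0} := by
      ext v; simp [hMdef, Set.mem_inter_iff]
    rw [this]
    exact hPcomp.isClosed.inter (isClosed_eq (hθcont ustar rstar) continuous_const)
  have hMcomp : IsCompact M := hPcomp.of_isClosed_subset hMclosed hMsub
  have hMconv : Convex ℝ M := by
    intro v hv w hw α β hα hβ hab
    refine ⟨hPconv hv.1 hw.1 hα hβ hab, ?_⟩
    have hsum : (∑ j, (α • v + β • w) j * g j ustar (rstar j))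
        = α * (∑ j, v j * g j ustar (rstar j)) + β * (∑ j, w j * g j ustar (rstar j)) := by
      rw [Finset.mul_sum, Finset.mul_sum, ← Finset.sum_add_distrib]
      exact Finset.sum_congr rfl fun j _ => by
        simp [Pi.add_apply, Pi.smul_apply, smul_eq_mul]; ring
    rw [hsum, hv.2, hw.2]
    linear_combination S0 * hab
  -- the sign-condition cone
  set Ku : Fin a → Set ℝ := fun i =>
    if ustar i = uhi i then Set.Iic 0 else if ustar i = ulo i then Set.Ici 0 else {0}
    with hKudef
  set Kr : Fin L → Fin b → Set ℝ := fun j i =>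
    if rstar j i = rhi j i then Set.Iic 0 else if rstar j i = rlo j i then Set.Ici 0 else {0}
    with hKrdef
  have hKu : ∀ i, IsClosed (Ku i) ∧ Convex ℝ (Ku i) ∧ (0:ℝ) ∈ Ku i
      ∧ (∀ c x : ℝ, 0 ≤ c → x ∈ Ku i → c * x ∈ Ku i) := fun i => cone_props (by rw [hKudef])
  have hKr : ∀ j i, IsClosed (Kr j i) ∧ Convex ℝ (Kr j i) ∧ (0:ℝ) ∈ Kr j i
      ∧ (∀ c x : ℝ, 0 ≤ c → x ∈ Kr j i → c * x ∈ Kr j i) := fun j i => cone_props (by rw [hKrdef])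
  set Q : Set ((Fin a → ℝ) × (Fin L → Fin b → ℝ)) :=
    {p | (∀ i, p.1 i ∈ Ku i) ∧ (∀ j i, p.2 j i ∈ Kr j i)} with hQdef
  have main : ∃ v ∈ M, (cu v, cr v) ∈ Q := by
    by_contra hcon
    push_neg at hcon
    -- affineness of the gradient-coordinate map
    have hcaff : ∀ (α β : ℝ), α + β = 1 → ∀ v w : Fin L → ℝ,
        cu (α • v + β • w) = α • cu v + β • cu w
          ∧ cr (α • v + β • w) = α • cr v + β • cr w := by
      intro α β hab v w
      constructor
      · funext i
        simp only [hcudef, Pi.add_apply, Pi.smul_apply, smul_eq_mul]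
        have hs : (∑ j, (α * v j + β * w j) * Dg j (Pi.single i 1, 0))
            = α * ∑ j, v j * Dg j (Pi.single i 1, 0)
              + β * ∑ j, w j * Dg j (Pi.single i 1, 0) := by
          rw [Finset.mul_sum, Finset.mul_sum, ← Finset.sum_add_distrib]
          exact Finset.sum_congr rfl fun j _ => by ring
        rw [hs]
        linear_combination (DF (Pi.single i 1)) * hab.symm
      · funext j i
        simp only [hcrdef, Pi.add_apply, Pi.smul_apply, smul_eq_mul]
        ring
    have hGconv : Convex ℝ ((fun v => (cu v, cr v)) '' M) := by
      rintro _ ⟨v, hv, rfl⟩ _ ⟨w, hw, rfl⟩ α β hα hβ hab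
      refine ⟨α • v + β • w, hMconv hv hw hα hβ hab, ?_⟩
      obtain ⟨h1, h2⟩ := hcaff α β hab v w
      simp only [h1, h2]
      rfl
    have hccont : Continuous fun v : Fin L → ℝ => (cu v, cr v) := by
      refine Continuous.prodMk ?_ ?_
      · refine continuous_pi fun i => ?_
        simp only [hcudef]
        exact continuous_const.add (continuous_finset_sum _ fun j _ =>
          (continuous_apply j).mul continuous_const)
      · refine continuous_pi fun j => continuous_pi fun i => ?_
        simp only [hcrdef]
        exact (continuous_apply j).mul continuous_const
    have hGcomp : IsCompact ((fun v => (cu v, cr v)) '' M) := hMcomp.image hccont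
    have hQconv : Convex ℝ Q := by
      intro p hp q hq α β hα hβ hab
      refine ⟨fun i => ?_, fun j i => ?_⟩
      · have h2 := (hKu i).2.1 (hp.1 i) (hq.1 i) hα hβ hab
        simpa [smul_eq_mul] using h2
      · have h2 := (hKr j i).2.1 (hp.2 j i) (hq.2 j i) hα hβ hab
        simpa [smul_eq_mul] using h2
    have hQclosed : IsClosed Q := by
      have hQeq : Q = (⋂ i, {p : (Fin a → ℝ) × (Fin L → Fin b → ℝ) | p.1 i ∈ Ku i})
          ∩ (⋂ j, ⋂ i, {p : (Fin a → ℝ) × (Fin L → Fin b → ℝ) | p.2 j i ∈ Kr j i}) := by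
        ext p
        simp only [hQdef, Set.mem_setOf_eq, Set.mem_inter_iff, Set.mem_iInter]
      rw [hQeq]
      refine IsClosed.inter (isClosed_iInter fun i => ?_)
        (isClosed_iInter fun j => isClosed_iInter fun i => ?_)
      · exact (hKu i).1.preimage ((continuous_apply i).comp continuous_fst)
      · exact (hKr j i).1.preimage
          ((continuous_apply i).comp ((continuous_apply j).comp continuous_snd))
    have hdisj : Disjoint ((fun v => (cu v, cr v)) '' M) Q := by
      rw [Set.disjoint_left]
      rintro x ⟨v, hvM, rfl⟩ hxQ
      exact hcon v hvM hxQ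
    obtain ⟨f, U, V, hfG, hUV, hfQmem⟩ :=
      geometric_hahn_banach_compact_closed hGconv hGcomp hQconv hQclosed hdisj
    have hQ0 : (0 : (Fin a → ℝ) × (Fin L → Fin b → ℝ)) ∈ Q :=
      ⟨fun i => by simpa using (hKu i).2.2.1, fun j i => by simpa using (hKr j i).2.2.1⟩
    have hV0 : V < 0 := by
      have h0 := hfQmem 0 hQ0
      rwa [map_zero] at h0
    have hfG0 : ∀ v ∈ M, f (cu v, cr v) < 0 := fun v hv =>
      lt_trans (hfG _ ⟨v, hv, rfl⟩) (hUV.trans hV0)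
    have hQscale : ∀ c : ℝ, 0 ≤ c → ∀ p ∈ Q, c • p ∈ Q := by
      intro c hc p hp
      refine ⟨fun i => ?_, fun j i => ?_⟩
      · have h2 := (hKu i).2.2.2 c (p.1 i) hc (hp.1 i)
        simpa [smul_eq_mul] using h2
      · have h2 := (hKr j i).2.2.2 c (p.2 j i) hc (hp.2 j i)
        simpa [smul_eq_mul] using h2
    have hfQnn : ∀ p ∈ Q, 0 ≤ f p := by
      intro p hp
      by_contra hneg
      push_neg at hneg
      have hfne : f p ≠ 0 := ne_of_lt hneg
      have ht : (0:ℝ) ≤ (V - 1) / f p := by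
        rw [le_div_iff_of_neg hneg]
        nlinarith
      have hmem := hQscale _ ht p hp
      have h2 := hfQmem _ hmem
      rw [map_smul, smul_eq_mul, div_mul_cancel₀ _ hfne] at h2
      linarith
    -- the direction
    set yu : Fin a → ℝ := fun i => f (Pi.single i 1, 0) with hyudef
    set yr : Fin L → Fin b → ℝ := fun j i => f (0, Pi.single j (Pi.single i 1)) with hyrdef
    have hvalu : ∀ (i : Fin a) (c : ℝ), c ∈ Ku i → 0 ≤ c * yu i := by
      intro i c hc
      have hmemQ : ((Pi.single i c : Fin a → ℝ), (0 : Fin L → Fin b → ℝ)) ∈ Q := by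
        refine ⟨fun i' => ?_, fun j i' => by simpa using (hKr j i').2.2.1⟩
        show (Pi.single i c : Fin a → ℝ) i' ∈ Ku i'
        by_cases hii : i' = i
        · subst hii; rw [Pi.single_eq_same]; exact hc
        · rw [Pi.single_eq_of_ne hii]; exact (hKu i').2.2.1
      have h0 := hfQnn _ hmemQ
      have hsm : ((Pi.single i c : Fin a → ℝ), (0 : Fin L → Fin b → ℝ))
          = c • ((Pi.single i (1:ℝ) : Fin a → ℝ), (0 : Fin L → Fin b → ℝ)) := by
        refine Prod.ext ?_ (by simp)
        funext k
        by_cases hk : k = i <;> simp [Pi.single_apply, hk]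
      rw [hsm, map_smul, smul_eq_mul] at h0
      exact h0
    have hvalr : ∀ (j : Fin L) (i : Fin b) (c : ℝ), c ∈ Kr j i → 0 ≤ c * yr j i := by
      intro j i c hc
      have hmemQ : ((0 : Fin a → ℝ),
          (Pi.single j (Pi.single i c) : Fin L → Fin b → ℝ)) ∈ Q := by
        refine ⟨fun i' => by simpa using (hKu i').2.2.1, fun j' i' => ?_⟩
        show (Pi.single j (Pi.single i c) : Fin L → Fin b → ℝ) j' i' ∈ Kr j' i'
        by_cases hjj : j' = j
        · subst hjj
          rw [Pi.single_eq_same]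
          by_cases hii : i' = i
          · subst hii; rw [Pi.single_eq_same]; exact hc
          · rw [Pi.single_eq_of_ne hii]; exact (hKr j' i').2.2.1
        · rw [Pi.single_eq_of_ne hjj]; simpa using (hKr j' i').2.2.1
      have h0 := hfQnn _ hmemQ
      have hsm : ((0 : Fin a → ℝ), (Pi.single j (Pi.single i c) : Fin L → Fin b → ℝ))
          = c • ((0 : Fin a → ℝ),
            (Pi.single j (Pi.single i (1:ℝ)) : Fin L → Fin b → ℝ)) := by
        refine Prod.ext (by simp) ?_
        funext k l
        by_cases hk : k = j <;> by_cases hl : l = i <;> simp [Pi.single_apply, hk, hl]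
      rw [hsm, map_smul, smul_eq_mul] at h0
      exact h0
    have hyu_hi : ∀ i, ustar i = uhi i → yu i ≤ 0 := by
      intro i h1
      have hmem : (-1 : ℝ) ∈ Ku i := by
        rw [hKudef]; simp only [if_pos h1, Set.mem_Iic]; norm_num
      have := hvalu i (-1) hmem
      linarith
    have hyu_lo : ∀ i, ustar i = ulo i → 0 ≤ yu i := by
      intro i h1
      have hne : ustar i ≠ uhi i := by rw [h1]; exact (hubox i).ne
      have hmem : (1 : ℝ) ∈ Ku i := by
        rw [hKudef]; simp only [if_neg hne, if_pos h1, Set.mem_Ici]; norm_num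
      have := hvalu i 1 hmem
      linarith
    have hyr_hi : ∀ j i, rstar j i = rhi j i → yr j i ≤ 0 := by
      intro j i h1
      have hmem : (-1 : ℝ) ∈ Kr j i := by
        rw [hKrdef]; simp only [if_pos h1, Set.mem_Iic]; norm_num
      have := hvalr j i (-1) hmem
      linarith
    have hyr_lo : ∀ j i, rstar j i = rlo j i → 0 ≤ yr j i := by
      intro j i h1
      have hne : rstar j i ≠ rhi j i := by rw [h1]; exact (hrbox j i).ne
      have hmem : (1 : ℝ) ∈ Kr j i := by
        rw [hKrdef]; simp only [if_neg hne, if_pos h1, Set.mem_Ici]; norm_num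
      have := hvalr j i 1 hmem
      linarith
    -- step sizes
    have hτuex : ∀ i, ∃ τ : ℝ, 0 < τ ∧ ∀ t : ℝ, 0 ≤ t → t ≤ τ →
        ulo i ≤ ustar i + t * yu i ∧ ustar i + t * yu i ≤ uhi i := fun i =>
      step_aux (hufeas i).1 (hufeas i).2 (hubox i) (hyu_hi i) (hyu_lo i)
    choose τu hτupos hτuspec using hτuex
    have hτrex : ∀ j i, ∃ τ : ℝ, 0 < τ ∧ ∀ t : ℝ, 0 ≤ t → t ≤ τ →
        rlo j i ≤ rstar j i + t * yr j i ∧ rstar j i + t * yr j i ≤ rhi j i := fun j i =>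
      step_aux (hrfeas' j i).1 (hrfeas' j i).2 (hrbox j i) (hyr_hi j i) (hyr_lo j i)
    choose τr hτrpos hτrspec using hτrex
    set T : Finset ℝ := insert 1 ((Finset.univ.image τu)
      ∪ (Finset.univ.image fun p : Fin L × Fin b => τr p.1 p.2)) with hTdef
    have hTne : T.Nonempty := ⟨1, Finset.mem_insert_self _ _⟩
    have hTpos : ∀ x ∈ T, (0:ℝ) < x := by
      intro x hx
      rw [hTdef] at hx
      rcases Finset.mem_insert.1 hx with hone | hmem2
      · rw [hone]; norm_num
      · rcases Finset.mem_union.1 hmem2 with hm | hm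
        · obtain ⟨i, _, hi⟩ := Finset.mem_image.1 hm
          rw [← hi]; exact hτupos i
        · obtain ⟨p, _, hp⟩ := Finset.mem_image.1 hm
          rw [← hp]; exact hτrpos p.1 p.2
    set t₀ : ℝ := T.min' hTne with ht₀def
    have ht₀pos : 0 < t₀ := hTpos _ (T.min'_mem hTne)
    have ht₀le_u : ∀ i, t₀ ≤ τu i := fun i => Finset.min'_le _ _
      (Finset.mem_insert_of_mem (Finset.mem_union_left _
        (Finset.mem_image_of_mem τu (Finset.mem_univ i))))
    have ht₀le_r : ∀ j i, t₀ ≤ τr j i := fun j i => Finset.min'_le _ _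
      (Finset.mem_insert_of_mem (Finset.mem_union_right _
        (Finset.mem_image_of_mem _ (Finset.mem_univ (j, i)))))
    -- feasibility of the perturbed points
    have hfeas : ∀ t : ℝ, 0 ≤ t → t ≤ t₀ →
        (ustar + t • yu) ∈ B₀ ∧ ∀ j, (rstar j + t • yr j) ∈ B j := by
      intro t ht htt
      constructor
      · rw [hB₀]
        intro i
        have h2 := hτuspec i t ht (htt.trans (ht₀le_u i))
        simpa using h2
      · intro j
        rw [hB j]
        intro i
        have h2 := hτrspec j i t ht (htt.trans (ht₀le_r j i))
        simpa using h2
    have hΦstar : Φ ustar rstar = F ustar + S0 := by rw [hΦ, hS0def]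
    -- the one-dimensional function along the ray, for each weight vector
    set ψ : (Fin L → ℝ) → ℝ → ℝ := fun v t =>
      F (ustar + t • yu) + ∑ j, v j * g j (ustar + t • yu) (rstar j + t • yr j) with hψdef
    have hψ0le : ∀ v ∈ P, ψ v 0 ≤ Φ ustar rstar := by
      intro v hv
      rw [hΦstar]
      simp only [hψdef, zero_smul, add_zero]
      exact add_le_add le_rfl (key_le ustar rstar v hv)
    have hψconv : ∀ v ∈ P, ConvexOn ℝ Set.univ (ψ v) := by
      intro v hv
      have hlineF : ∀ t : ℝ, (AffineMap.lineMap ustar (ustar + yu)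
          : ℝ →ᵃ[ℝ] (Fin a → ℝ)) t = ustar + t • yu := by
        intro t
        rw [AffineMap.lineMap_apply_module']
        rw [add_sub_cancel_left, add_comm]
      have hF := hFconv.comp_affineMap (AffineMap.lineMap ustar (ustar + yu))
      rw [Set.preimage_univ] at hF
      have hFeq : (F ∘ (AffineMap.lineMap ustar (ustar + yu) : ℝ →ᵃ[ℝ] (Fin a → ℝ)))
          = fun t : ℝ => F (ustar + t • yu) :=
        funext fun t => by rw [Function.comp_apply, hlineF]
      rw [hFeq] at hF
      have hG : ∀ j : Fin L, ConvexOn ℝ Set.univ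
          (fun t : ℝ => v j * g j (ustar + t • yu) (rstar j + t • yr j)) := by
        intro j
        have hlineg : ∀ t : ℝ, (AffineMap.lineMap (ustar, rstar j)
            (ustar + yu, rstar j + yr j) : ℝ →ᵃ[ℝ] (Fin a → ℝ) × (Fin b → ℝ)) t
            = (ustar + t • yu, rstar j + t • yr j) := by
          intro t
          rw [AffineMap.lineMap_apply_module']
          have hsub : ((ustar + yu, rstar j + yr j) : (Fin a → ℝ) × (Fin b → ℝ))
              - (ustar, rstar j) = (yu, yr j) := by
            rw [Prod.mk_sub_mk, add_sub_cancel_left, add_sub_cancel_left]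
          rw [hsub, Prod.smul_mk, Prod.mk_add_mk]
          exact Prod.ext (add_comm _ _) (add_comm _ _)
        have hcomp := (hgconv j).comp_affineMap
          (AffineMap.lineMap (ustar, rstar j) (ustar + yu, rstar j + yr j))
        rw [Set.preimage_univ] at hcomp
        have heq : ((fun p : (Fin a → ℝ) × (Fin b → ℝ) => g j p.1 p.2)
            ∘ (AffineMap.lineMap (ustar, rstar j) (ustar + yu, rstar j + yr j)
              : ℝ →ᵃ[ℝ] (Fin a → ℝ) × (Fin b → ℝ)))
            = fun t : ℝ => g j (ustar + t • yu) (rstar j + t • yr j) :=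
          funext fun t => by rw [Function.comp_apply, hlineg]
        rw [heq] at hcomp
        have hvj : 0 ≤ v j := (hPsub hv).1 j
        have h3 := hcomp.smul hvj
        simpa [smul_eq_mul] using h3
      have hsum := convexOn_finset_sum (s := Finset.univ)
        (f := fun j (t : ℝ) => v j * g j (ustar + t • yu) (rstar j + t • yr j))
        (fun j _ => hG j)
      exact hF.add hsum
    have hmono : ∀ v ∈ P, ∀ s s' : ℝ, 0 < s → s ≤ s' →
        Φ ustar rstar ≤ ψ v s → Φ ustar rstar ≤ ψ v s' := by
      intro v hv s s' hs hss hle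
      have hs' : 0 < s' := lt_of_lt_of_le hs hss
      have hlam0 : 0 < s / s' := div_pos hs hs'
      have hlam1 : s / s' ≤ 1 := (div_le_one hs').2 hss
      have hcomb := (hψconv v hv).2 (Set.mem_univ (0:ℝ)) (Set.mem_univ s')
        (by linarith : (0:ℝ) ≤ 1 - s / s') (le_of_lt hlam0) (by ring)
      have harg : (1 - s / s') • (0:ℝ) + (s / s') • s' = s := by
        rw [smul_eq_mul, smul_eq_mul, mul_zero, zero_add, div_mul_cancel₀]
        exact ne_of_gt hs'
      rw [harg] at hcomb
      rw [smul_eq_mul, smul_eq_mul] at hcomb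
      exact slope_mono hlam0 hlam1 hcomb (hψ0le v hv) hle
    have hZne : ∀ s : ℝ, 0 < s → s ≤ t₀ → ∃ v ∈ P, Φ ustar rstar ≤ ψ v s := by
      intro s hs hst
      obtain ⟨hufs, hrfs⟩ := hfeas s (le_of_lt hs) hst
      obtain ⟨v, hvP, hve⟩ := key_att (ustar + s • yu) (fun j => rstar j + s • yr j)
      refine ⟨v, hvP, ?_⟩
      have hΦs := hopt _ hufs _ hrfs
      rw [hΦ (ustar + s • yu) (fun j => rstar j + s • yr j)] at hΦs
      have hve' : (∑ j, v j * g j (ustar + s • yu) (rstar j + s • yr j))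
          = sSup {x : ℝ | ∃ q ∈ P, x = ∑ j, q j * g j (ustar + s • yu) (rstar j + s • yr j)} := by
        simpa using hve
      have hΦs' : Φ ustar rstar ≤ F (ustar + s • yu)
          + sSup {x : ℝ | ∃ q ∈ P, x = ∑ j, q j * g j (ustar + s • yu) (rstar j + s • yr j)} := by
        simpa using hΦs
      simp only [hψdef]
      rw [hve']
      exact hΦs'
    haveI : Nonempty {s : ℝ // 0 < s ∧ s ≤ t₀} := ⟨⟨t₀, ht₀pos, le_refl t₀⟩⟩
    set Z : {s : ℝ // 0 < s ∧ s ≤ t₀} → Set (Fin L → ℝ) :=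
      fun s => {v ∈ P | Φ ustar rstar ≤ ψ v s.1} with hZdef
    have hψcontv : ∀ s : ℝ, Continuous fun v : Fin L → ℝ => ψ v s := by
      intro s
      simp only [hψdef]
      exact continuous_const.add (continuous_finset_sum _ fun j _ =>
        (continuous_apply j).mul continuous_const)
    have hZclosed : ∀ s, IsClosed (Z s) := by
      intro s
      have : Z s = P ∩ {v : Fin L → ℝ | Φ ustar rstar ≤ ψ v s.1} := rfl
      rw [this]
      exact hPcomp.isClosed.inter (isClosed_le continuous_const (hψcontv s.1))
    have hZcomp : ∀ s, IsCompact (Z s) := fun s =>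
      hPcomp.of_isClosed_subset (hZclosed s) (fun v hv => hv.1)
    have hZnon : ∀ s, (Z s).Nonempty := by
      intro s
      obtain ⟨v, hv, hlev⟩ := hZne s.1 s.2.1 s.2.2
      exact ⟨v, hv, hlev⟩
    have hZdir : Directed (· ⊇ ·) Z := by
      intro s1 s2
      refine ⟨⟨min s1.1 s2.1, lt_min s1.2.1 s2.2.1,
        le_trans (min_le_left _ _) s1.2.2⟩, ?_, ?_⟩
      · intro v hv
        exact ⟨hv.1, hmono v hv.1 _ _ (lt_min s1.2.1 s2.2.1) (min_le_left _ _) hv.2⟩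
      · intro v hv
        exact ⟨hv.1, hmono v hv.1 _ _ (lt_min s1.2.1 s2.2.1) (min_le_right _ _) hv.2⟩
    obtain ⟨vs, hvs⟩ := IsCompact.nonempty_iInter_of_directed_nonempty_isCompact_isClosed
      Z hZdir hZnon hZcomp hZclosed
    rw [Set.mem_iInter] at hvs
    have hvsP : vs ∈ P := (hvs ⟨t₀, ht₀pos, le_refl t₀⟩).1
    have hvs_all : ∀ s : ℝ, 0 < s → s ≤ t₀ → Φ ustar rstar ≤ ψ vs s :=
      fun s h1 h2 => (hvs ⟨s, h1, h2⟩).2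
    have hlinecont : Continuous fun t : ℝ => ustar + t • yu :=
      continuous_const.add (continuous_id.smul continuous_const)
    have hψcontt : Continuous (ψ vs) := by
      simp only [hψdef]
      refine ((hFdiff.continuous).comp hlinecont).add ?_
      refine continuous_finset_sum _ fun j _ => continuous_const.mul ?_
      have hpair : Continuous fun t : ℝ =>
          ((ustar + t • yu, rstar j + t • yr j) : (Fin a → ℝ) × (Fin b → ℝ)) :=
        hlinecont.prodMk (continuous_const.add (continuous_id.smul continuous_const))
      exact (hgcont j).comp hpair
    have hψ0ge : Φ ustar rstar ≤ ψ vs 0 := by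
      have htend : Filter.Tendsto (ψ vs) (nhdsWithin 0 (Set.Ioi 0)) (nhds (ψ vs 0)) :=
        (hψcontt.tendsto 0).mono_left nhdsWithin_le_nhds
      refine ge_of_tendsto htend ?_
      filter_upwards [Ioc_mem_nhdsGT ht₀pos] with s hs
      exact hvs_all s hs.1 hs.2
    have hψ0eq : ψ vs 0 = Φ ustar rstar := le_antisymm (hψ0le vs hvsP) hψ0ge
    have hvsM : vs ∈ M := by
      refine ⟨hvsP, ?_⟩
      have h1 : ψ vs 0 = F ustar + ∑ j, vs j * g j ustar (rstar j) := by
        simp [hψdef]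
      rw [h1, hΦstar] at hψ0eq
      exact add_left_cancel hψ0eq
    -- derivative of ψ vs at 0
    have hlineu : HasDerivAt (fun t : ℝ => ustar + t • yu) yu 0 := by
      simpa using ((hasDerivAt_id (0:ℝ)).smul_const yu).const_add ustar
    have hliner : ∀ j, HasDerivAt (fun t : ℝ => rstar j + t • yr j) (yr j) 0 := fun j => by
      simpa using ((hasDerivAt_id (0:ℝ)).smul_const (yr j)).const_add (rstar j)
    have hFd : HasDerivAt (fun t : ℝ => F (ustar + t • yu)) (DF yu) 0 := by
      have h0 : HasFDerivAt F DF (ustar + (0:ℝ) • yu) := by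
        simpa using (hFdiff ustar).hasFDerivAt
      exact h0.comp_hasDerivAt 0 hlineu
    have hgd : ∀ j, HasDerivAt
        (fun t : ℝ => g j (ustar + t • yu) (rstar j + t • yr j)) ((Dg j) (yu, yr j)) 0 := by
      intro j
      have hpair : HasDerivAt (fun t : ℝ =>
          ((ustar + t • yu, rstar j + t • yr j) : (Fin a → ℝ) × (Fin b → ℝ)))
          (yu, yr j) 0 := hlineu.prodMk (hliner j)
      have h0 : HasFDerivAt (fun p : (Fin a → ℝ) × (Fin b → ℝ) => g j p.1 p.2) (Dg j)
          (ustar + (0:ℝ) • yu, rstar j + (0:ℝ) • yr j) := by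
        simpa using (hgdiff j (ustar, rstar j)).hasFDerivAt
      exact h0.comp_hasDerivAt 0 hpair
    have hψd : HasDerivAt (ψ vs) (DF yu + ∑ j, vs j * (Dg j) (yu, yr j)) 0 := by
      simp only [hψdef]
      exact hFd.add (HasDerivAt.fun_sum fun j _ => HasDerivAt.const_mul (vs j) (hgd j))
    have hderiv_nonneg : 0 ≤ DF yu + ∑ j, vs j * (Dg j) (yu, yr j) := by
      have hslope := hasDerivAt_iff_tendsto_slope.1 hψd
      have hslope' : Filter.Tendsto (slope (ψ vs) 0) (nhdsWithin 0 (Set.Ioi 0))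
          (nhds (DF yu + ∑ j, vs j * (Dg j) (yu, yr j))) :=
        hslope.mono_left (nhdsWithin_mono 0 fun x hx => ne_of_gt hx)
      refine ge_of_tendsto hslope' ?_
      filter_upwards [Ioc_mem_nhdsGT ht₀pos] with s hs
      have h1 := hvs_all s hs.1 hs.2
      rw [slope_def_field]
      apply div_nonneg
      · rw [hψ0eq]; linarith
      · linarith [hs.1]
    -- identify the derivative with f applied to the gradient coordinates
    have hDg_split : ∀ j, (Dg j) (yu, yr j) = (Dg j) (yu, 0) + (Dg j) (0, yr j) := by
      intro j
      rw [← map_add]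
      congr 1
      rw [Prod.mk_add_mk, add_zero, zero_add]
    have hfexp : f (cu vs, cr vs) = ∑ i, cu vs i * yu i + ∑ j, ∑ i, cr vs j i * yr j i := by
      have hsplit : ((cu vs, cr vs) : (Fin a → ℝ) × (Fin L → Fin b → ℝ))
          = (cu vs, 0) + (0, cr vs) := by simp
      rw [hsplit, map_add]
      congr 1
      · have h2 := clm_expand
          (f.comp (ContinuousLinearMap.inl ℝ (Fin a → ℝ) (Fin L → Fin b → ℝ))) (cu vs)
        simpa [hyudef] using h2
      · have h2 := clm_expand2
          (f.comp (ContinuousLinearMap.inr ℝ (Fin a → ℝ) (Fin L → Fin b → ℝ))) (cr vs)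
        simpa [hyrdef] using h2
    have hDval : DF yu + ∑ j, vs j * (Dg j) (yu, yr j) = f (cu vs, cr vs) := by
      rw [hfexp, clm_expand DF yu]
      have e1 : ∀ j, (Dg j) (yu, (0 : Fin b → ℝ))
          = ∑ i, yu i * (Dg j) (Pi.single i 1, 0) := by
        intro j
        have h2 := clm_expand
          ((Dg j).comp (ContinuousLinearMap.inl ℝ (Fin a → ℝ) (Fin b → ℝ))) yu
        simpa using h2
      have e2 : ∀ j, (Dg j) ((0 : Fin a → ℝ), yr j)
          = ∑ i, yr j i * (Dg j) (0, Pi.single i 1) := by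
        intro j
        have h2 := clm_expand
          ((Dg j).comp (ContinuousLinearMap.inr ℝ (Fin a → ℝ) (Fin b → ℝ))) (yr j)
        simpa using h2
      simp only [hDg_split, e1, e2, hcudef, hcrdef]
      simp only [add_mul, Finset.sum_add_distrib, mul_add, Finset.mul_sum, Finset.sum_mul]
      rw [Finset.sum_comm (s := Finset.univ) (t := Finset.univ)
        (f := fun (j : Fin L) (i : Fin a) => vs j * (yu i * (Dg j) (Pi.single i 1, 0)))]
      rw [← add_assoc]
      congr 1
      congr 1
      · exact Finset.sum_congr rfl fun i _ => mul_comm _ _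
      · exact Finset.sum_congr rfl fun i _ => Finset.sum_congr rfl fun j _ => by ring
      · exact Finset.sum_congr rfl fun j _ => Finset.sum_congr rfl fun i _ => by ring
    have hcontra := hfG0 vs hvsM
    rw [← hDval] at hcontra
    exact absurd hcontra (not_lt.2 hderiv_nonneg)
  -- final assembly
  obtain ⟨v, hvM, hvQ⟩ := main
  refine ⟨v, hvM.1, hvM.2, fun i => ?_, fun j i => ?_⟩
  · have h := hvQ.1 i
    rw [hcu v i]
    by_cases h1 : ustar i = uhi i
    · rw [hKudef] at h; simp only [if_pos h1] at h
      exact ⟨fun _ => h, fun h2 => absurd (h2.symm.trans h1) (hubox i).ne,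
        fun h3 _ => absurd h1 h3⟩
    · by_cases h2 : ustar i = ulo i
      · rw [hKudef] at h; simp only [if_neg h1, if_pos h2] at h
        exact ⟨fun hh => absurd hh h1, fun _ => h, fun _ h4 => absurd h2 h4⟩
      · rw [hKudef] at h; simp only [if_neg h1, if_neg h2, Set.mem_singleton_iff] at h
        exact ⟨fun hh => absurd hh h1, fun hh => absurd hh h2, fun _ _ => h⟩
  · have h := hvQ.2 j i
    rw [hcr v j i]
    by_cases h1 : rstar j i = rhi j i
    · rw [hKrdef] at h; simp only [if_pos h1] at h
      exact ⟨fun _ => h, fun h2 => absurd (h2.symm.trans h1) (hrbox j i).ne,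
        fun h3 _ => absurd h1 h3⟩
    · by_cases h2 : rstar j i = rlo j i
      · rw [hKrdef] at h; simp only [if_neg h1, if_pos h2] at h
        exact ⟨fun hh => absurd hh h1, fun _ => h, fun _ h4 => absurd h2 h4⟩
      · rw [hKrdef] at h; simp only [if_neg h1, if_neg h2, Set.mem_singleton_iff] at h
        exact ⟨fun hh => absurd hh h1, fun hh => absurd hh h2, fun _ _ => h⟩
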